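/- For every integer k ≥ 1, let P = {(x, y) ∈ ℤ² : 1 ≤ x ≤ k, 1 ≤ y ≤ 2k²}, so n := |P| = 2k³, and set ε := 1/(2k²). Then the family F of lines {y = ax + b : a, b ∈ ℤ, 1 ≤ a ≤ k, 1 ≤ b ≤ k²} consists of k³ pairwise distinct lines, each line of F contains exactly εn = k points of P, any two distinct lines of F have at most one point of P in common, and |F| = k³ = ε^{−3/2}/(2√2). In particular, a family of lines each containing exactly εn points of a set of n points, with pairwise intersections of size at most one, can have size Ω(ε^{−3/2}). -/

import Mathlib

/-- The Elekes-type construction: for every integer `k ≥ 1`, the grid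
`P = {(x,y) ∈ ℤ² : 1 ≤ x ≤ k, 1 ≤ y ≤ 2k²}` (viewed in `ℝ²`) has `n = |P| = 2k³` points,
and with `ε = 1/(2k²)`, the family `F` of lines `y = a*x + b` with integers `1 ≤ a ≤ k`,
`1 ≤ b ≤ k²` consists of `k³` pairwise distinct lines, each containing exactly `εn = k`
points of `P`, any two distinct lines of `F` sharing at most one point of `P`, and
`|F| = k³ = ε^{-3/2}/(2√2)`. -/
theorem elekes_grid_construction (k : ℕ) (hk : 1 ≤ k)
    (P : Finset (ℝ × ℝ))
    (hP : P = ((Finset.Icc (1 : ℤ) (k : ℤ)) ×ˢ (Finset.Icc (1 : ℤ) (2 * (k : ℤ) ^ 2))).image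
      (fun p : ℤ × ℤ => ((p.1 : ℝ), (p.2 : ℝ))))
    (ε : ℝ) (hε : ε = 1 / (2 * (k : ℝ) ^ 2))
    (F : Set (Set (ℝ × ℝ)))
    (hF : F = {L : Set (ℝ × ℝ) | ∃ a b : ℤ, 1 ≤ a ∧ a ≤ (k : ℤ) ∧ 1 ≤ b ∧ b ≤ (k : ℤ) ^ 2 ∧
      L = {p : ℝ × ℝ | p.2 = (a : ℝ) * p.1 + (b : ℝ)}}) :
    P.card = 2 * k ^ 3 ∧
    F.ncard = k ^ 3 ∧
    ε * (P.card : ℝ) = (k : ℝ) ∧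
    (∀ L ∈ F, ((L ∩ (P : Set (ℝ × ℝ))).ncard : ℝ) = ε * (P.card : ℝ)) ∧
    (∀ L₁ ∈ F, ∀ L₂ ∈ F, L₁ ≠ L₂ → (L₁ ∩ L₂ ∩ (P : Set (ℝ × ℝ))).ncard ≤ 1) ∧
    ((k : ℝ) ^ 3 = ε ^ (-(3 : ℝ) / 2) / (2 * Real.sqrt 2)) := by
  classical
  have hk0 : (0 : ℝ) < (k : ℝ) := by exact_mod_cast hk
  -- Part 1
  have hcast_inj : Function.Injective (fun p : ℤ × ℤ => ((p.1 : ℝ), (p.2 : ℝ))) := by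
    intro p q h
    simp only [Prod.mk.injEq, Int.cast_inj] at h
    exact Prod.ext h.1 h.2
  have h1 : P.card = 2 * k ^ 3 := by
    rw [hP, Finset.card_image_of_injective _ hcast_inj, Finset.card_product,
      Int.card_Icc, Int.card_Icc]
    simp only [add_sub_cancel_right]
    rw [show (2 * (k:ℤ)^2 : ℤ) = ((2 * k^2 : ℕ) : ℤ) by push_cast; ring]
    rw [Int.toNat_natCast, Int.toNat_natCast]
    ring
  refine ⟨h1, ?_, ?_, ?_, ?_, ?_⟩
  -- Part 2
  · have hline_inj : Function.Injective
        (fun q : ℤ × ℤ => {p : ℝ × ℝ | p.2 = (q.1 : ℝ) * p.1 + (q.2 : ℝ)}) := by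
      intro q q' h
      have h' : {p : ℝ × ℝ | p.2 = (q.1 : ℝ) * p.1 + (q.2 : ℝ)} =
          {p : ℝ × ℝ | p.2 = (q'.1 : ℝ) * p.1 + (q'.2 : ℝ)} := h
      have h0 : ((q.2 : ℝ)) = (q'.1 : ℝ) * 0 + (q'.2 : ℝ) := by
        have : ((0:ℝ), (q.2:ℝ)) ∈ {p : ℝ × ℝ | p.2 = (q.1 : ℝ) * p.1 + (q.2 : ℝ)} := by
          simp
        rw [h'] at this; exact this
      have hb : (q.2 : ℝ) = (q'.2 : ℝ) := by simpa using h0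
      have h1' : ((q.1 : ℝ) + (q.2 : ℝ)) = (q'.1 : ℝ) * 1 + (q'.2 : ℝ) := by
        have : ((1:ℝ), (q.1:ℝ) + (q.2:ℝ)) ∈
            {p : ℝ × ℝ | p.2 = (q.1 : ℝ) * p.1 + (q.2 : ℝ)} := by simp
        rw [h'] at this; exact this
      have ha : (q.1 : ℝ) = (q'.1 : ℝ) := by linarith
      exact Prod.ext (by exact_mod_cast ha) (by exact_mod_cast hb)
    have hFeq : F = ↑(((Finset.Icc (1:ℤ) (k:ℤ)) ×ˢ (Finset.Icc (1:ℤ) ((k:ℤ)^2))).image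
        (fun q : ℤ × ℤ => {p : ℝ × ℝ | p.2 = (q.1 : ℝ) * p.1 + (q.2 : ℝ)})) := by
      rw [hF]
      ext L
      simp only [Set.mem_setOf_eq, Finset.coe_image, Set.mem_image, Finset.mem_coe,
        Finset.mem_product, Finset.mem_Icc]
      constructor
      · rintro ⟨a, b, ha1, ha2, hb1, hb2, rfl⟩
        exact ⟨(a, b), ⟨⟨ha1, ha2⟩, hb1, hb2⟩, rfl⟩
      · rintro ⟨⟨a, b⟩, ⟨⟨ha1, ha2⟩, hb1, hb2⟩, rfl⟩
        exact ⟨a, b, ha1, ha2, hb1, hb2, rfl⟩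
    rw [hFeq, Set.ncard_coe_finset, Finset.card_image_of_injective _ hline_inj,
      Finset.card_product, Int.card_Icc, Int.card_Icc]
    simp only [add_sub_cancel_right]
    rw [show ((k:ℤ)^2) = ((k^2 : ℕ) : ℤ) by push_cast; ring]
    rw [Int.toNat_natCast, Int.toNat_natCast]
    ring
  -- Part 3
  · rw [h1, hε]
    push_cast
    field_simp
  -- Part 4
  · intro L hL
    rw [hF] at hL
    obtain ⟨a, b, ha1, ha2, hb1, hb2, rfl⟩ := hL
    have hmain : {p : ℝ × ℝ | p.2 = (a : ℝ) * p.1 + (b : ℝ)} ∩ (P : Set (ℝ × ℝ)) =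
        (fun x : ℤ => ((x : ℝ), (a : ℝ) * (x : ℝ) + (b : ℝ))) '' ↑(Finset.Icc (1:ℤ) (k:ℤ)) := by
      ext p
      simp only [hP, Set.mem_inter_iff, Set.mem_setOf_eq, Finset.coe_image, Set.mem_image,
        Finset.mem_coe, Finset.mem_product, Finset.mem_Icc]
      constructor
      · rintro ⟨hline, ⟨x, y⟩, ⟨⟨hx1, hx2⟩, hy1, hy2⟩, rfl⟩
        exact ⟨x, ⟨hx1, hx2⟩, Prod.ext rfl hline.symm⟩
      · rintro ⟨x, ⟨hx1, hx2⟩, rfl⟩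
        refine ⟨rfl, (x, a * x + b), ⟨⟨hx1, hx2⟩, ?_, ?_⟩, by push_cast; rfl⟩
        · show (1:ℤ) ≤ a * x + b
          nlinarith
        · show a * x + b ≤ 2 * (k:ℤ)^2
          nlinarith [mul_le_mul ha2 hx2 (by linarith : (0:ℤ) ≤ x) (by linarith : (0:ℤ) ≤ (k:ℤ))]
    rw [hmain]
    have hinj : Set.InjOn (fun x : ℤ => ((x : ℝ), (a : ℝ) * (x : ℝ) + (b : ℝ)))
        ↑(Finset.Icc (1:ℤ) (k:ℤ)) := by
      intro x _ y _ h
      simp only [Prod.mk.injEq, Int.cast_inj] at h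
      exact h.1
    rw [Set.ncard_image_of_injOn hinj, Set.ncard_coe_finset, Int.card_Icc]
    simp only [add_sub_cancel_right, Int.toNat_natCast]
    rw [h1, hε]
    push_cast
    field_simp
  -- Part 5
  · intro L₁ hL₁ L₂ hL₂ hne
    rw [hF] at hL₁ hL₂
    obtain ⟨a₁, b₁, _, _, _, _, rfl⟩ := hL₁
    obtain ⟨a₂, b₂, _, _, _, _, rfl⟩ := hL₂
    have hsub : ({p : ℝ × ℝ | p.2 = (a₁ : ℝ) * p.1 + (b₁ : ℝ)} ∩
        {p : ℝ × ℝ | p.2 = (a₂ : ℝ) * p.1 + (b₂ : ℝ)}).Subsingleton := by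
      intro p hp q hq
      simp only [Set.mem_inter_iff, Set.mem_setOf_eq] at hp hq
      by_cases hA : (a₁ : ℝ) = (a₂ : ℝ)
      · exfalso
        have hb : (b₁ : ℝ) = (b₂ : ℝ) := by
          have heq := hp.1.symm.trans hp.2
          rw [hA] at heq
          linarith
        exact hne (by rw [hA, hb])
      · have hx : p.1 = q.1 := by
          have e1 : ((a₁ : ℝ) - a₂) * p.1 = (b₂ : ℝ) - b₁ := by linarith [hp.1, hp.2]
          have e2 : ((a₁ : ℝ) - a₂) * q.1 = (b₂ : ℝ) - b₁ := by linarith [hq.1, hq.2]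
          have hne' : ((a₁ : ℝ) - a₂) ≠ 0 := sub_ne_zero.mpr hA
          exact mul_left_cancel₀ hne' (e1.trans e2.symm)
        have hy : p.2 = q.2 := by rw [hp.1, hq.1, hx]
        exact Prod.ext hx hy
    have hsub' : ({p : ℝ × ℝ | p.2 = (a₁ : ℝ) * p.1 + (b₁ : ℝ)} ∩
        {p : ℝ × ℝ | p.2 = (a₂ : ℝ) * p.1 + (b₂ : ℝ)} ∩ (P : Set (ℝ × ℝ))).Subsingleton :=
      hsub.anti Set.inter_subset_left
    exact (Set.ncard_le_one_iff hsub'.finite).2 (fun ha hb => hsub' ha hb)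
  -- Part 6
  · rw [hε]
    have hc : (0 : ℝ) < 2 * (k : ℝ) ^ 2 := by positivity
    have key : (1 / (2 * (k : ℝ) ^ 2)) ^ (-(3 : ℝ) / 2) =
        (2 * (k : ℝ) ^ 2) ^ ((3 : ℝ) / 2) := by
      rw [one_div, ← Real.rpow_neg_one (2 * (k:ℝ)^2), ← Real.rpow_mul hc.le]
      norm_num
    rw [key, Real.mul_rpow (by norm_num) (by positivity)]
    have h2 : (2 : ℝ) ^ ((3 : ℝ) / 2) = 2 * Real.sqrt 2 := by
      rw [show (3:ℝ)/2 = 1 + 1/2 by norm_num, Real.rpow_add (by norm_num), Real.rpow_one,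
        Real.sqrt_eq_rpow]
    have hkpow : ((k : ℝ) ^ 2) ^ ((3 : ℝ) / 2) = (k : ℝ) ^ 3 := by
      rw [← Real.rpow_natCast (k:ℝ) 2, ← Real.rpow_mul hk0.le]
      norm_num
    rw [h2, hkpow]
    have hs : Real.sqrt 2 ≠ 0 := by positivity
    field_simp
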